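/- Suppose a bounded sequence (v_n) in a C*-algebra A satisfies ‖a − a^{1/2} v_n* v_n a^{1/2}‖_τ → 0 and ‖b − v_n a v_n*‖_τ → 0 for a bounded tracial positive functional τ on A and a, b ∈ A₊. Then for every tracial positive functional ν with ν ≤ τ and every n ∈ ℕ, ν(aᵏ) = ν(bᵏ) for all k ≥ 1. -/

import Mathlib

open scoped ComplexOrder

/-- `nupow a k = a^(k+1)` in a (possibly non-unital) ring. -/
def nupow {A : Type*} [NonUnitalRing A] (a : A) : ℕ → A
  | 0 => a
  | (n + 1) => nupow a n * a

section Stmt19Aux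

variable {A : Type*} [NonUnitalCStarAlgebra A] [PartialOrder A] [StarOrderedRing A]

private lemma herm (ν : A →L[ℂ] ℂ) (hpos : ∀ x : A, 0 ≤ x → 0 ≤ ν x) (x : A) :
    ν (star x) = (starRingEnd ℂ) (ν x) := by
  have hre : ∀ z : A, IsSelfAdjoint z → (starRingEnd ℂ) (ν z) = ν z := by
    intro z hz
    have h1 : 0 ≤ ν z⁺ := hpos _ (CFC.posPart_nonneg z)
    have h2 : 0 ≤ ν z⁻ := hpos _ (CFC.negPart_nonneg z)
    have e1 : (starRingEnd ℂ) (ν z⁺) = ν z⁺ := Complex.conj_eq_iff_im.mpr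
      (Complex.nonneg_iff.mp h1).2.symm
    have e2 : (starRingEnd ℂ) (ν z⁻) = ν z⁻ := Complex.conj_eq_iff_im.mpr
      (Complex.nonneg_iff.mp h2).2.symm
    have := CFC.posPart_sub_negPart z hz
    rw [← this, map_sub, map_sub, e1, e2]
  set h : A := (1/2 : ℂ) • (x + star x) with hh
  set k : A := (-(Complex.I)/2) • (x - star x) with hk
  have hhs : IsSelfAdjoint h := by
    rw [hh, IsSelfAdjoint, star_smul, star_add, star_star, add_comm]
    congr 1
    simp [starRingEnd_apply]
  have hks : IsSelfAdjoint k := by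
    rw [hk, IsSelfAdjoint, star_smul, star_sub, star_star]
    have : star (-Complex.I/2 : ℂ) = Complex.I/2 := by
      simp [Complex.ext_iff]
    rw [this, neg_div, neg_smul, ← smul_neg, neg_sub]
  have hx : x = h + Complex.I • k := by
    rw [hh, hk, smul_smul]
    rw [show Complex.I * (-Complex.I/2) = 1/2 by
      norm_num [Complex.ext_iff]]
    rw [← smul_add]
    rw [show x + star x + (x - star x) = (2:ℂ) • x by
      rw [two_smul]; abel]
    rw [smul_smul]; norm_num
  have hsx : star x = h - Complex.I • k := by
    rw [hh, hk, smul_smul]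
    rw [show Complex.I * (-Complex.I/2) = 1/2 by
      norm_num [Complex.ext_iff]]
    rw [← smul_sub]
    rw [show x + star x - (x - star x) = (2:ℂ) • star x by
      rw [two_smul]; abel]
    rw [smul_smul]; norm_num
  have e1 : ν (star x) = ν h - Complex.I * ν k := by
    rw [hsx, map_sub]; simp
  have e2 : ν x = ν h + Complex.I * ν k := by
    rw [hx, map_add]; simp
  rw [e1, e2, map_add, map_mul, Complex.conj_I, hre h hhs, hre k hks]
  ring

private lemma cs (ν : A →L[ℂ] ℂ) (hpos : ∀ x : A, 0 ≤ x → 0 ≤ ν x) (x y : A) :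
    ‖ν (star x * y)‖ ^ 2 ≤ (ν (star x * x)).re * (ν (star y * y)).re := by
  set m : ℂ := ν (star x * y) with hm
  set p : ℝ := (ν (star x * x)).re with hp
  set q : ℝ := (ν (star y * y)).re with hq
  have hpc : ν (star x * x) = (p : ℂ) := by
    have := Complex.nonneg_iff.mp (hpos _ (star_mul_self_nonneg x))
    exact Complex.ext rfl this.2.symm
  have hqc : ν (star y * y) = (q : ℂ) := by
    have := Complex.nonneg_iff.mp (hpos _ (star_mul_self_nonneg y))
    exact Complex.ext rfl this.2.symm
  have hp0 : 0 ≤ p := (Complex.nonneg_iff.mp (hpos _ (star_mul_self_nonneg x))).1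
  have hq0 : 0 ≤ q := (Complex.nonneg_iff.mp (hpos _ (star_mul_self_nonneg y))).1
  have hm' : ν (star y * x) = (starRingEnd ℂ) m := by
    rw [hm, ← herm ν hpos]
    congr 1
    rw [star_mul, star_star]
  have key : ∀ t : ℝ, 0 ≤ (Complex.normSq m * p) * (t * t) + (2 * Complex.normSq m) * t + q := by
    intro t
    set c : ℂ := (t : ℂ) * m with hc
    set z : A := c • x + y with hz
    have h0 : 0 ≤ ν (star z * z) := hpos _ (star_mul_self_nonneg z)
    have expand : ν (star z * z) =
        (starRingEnd ℂ) c * c * ν (star x * x) + (starRingEnd ℂ) c * ν (star x * y)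
          + c * ν (star y * x) + ν (star y * y) := by
      rw [hz]
      simp only [star_add, star_smul, Complex.star_def, add_mul, mul_add,
        smul_mul_assoc, mul_smul_comm, map_add, map_smul, smul_smul, smul_eq_mul]
      ring
    have expand2 : ν (star z * z) =
        ((Complex.normSq m * p) * (t * t) + (2 * Complex.normSq m) * t + q : ℝ) := by
      rw [expand, hpc, hqc, hm', ← hm, hc]
      simp only [map_mul, Complex.conj_ofReal]
      push_cast
      linear_combination ((t:ℂ) * (t:ℂ) * (p:ℂ) + 2 * (t:ℂ)) *
        (Complex.normSq_eq_conj_mul_self (z := m)).symm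
    rw [expand2] at h0
    exact_mod_cast h0
  have hd := discrim_le_zero key
  rw [discrim] at hd
  have hnm : ‖m‖ ^ 2 = Complex.normSq m := by
    rw [Complex.sq_norm]
  rw [hnm]
  have h0 : 0 ≤ Complex.normSq m := Complex.normSq_nonneg m
  rcases eq_or_lt_of_le h0 with h | h
  · rw [← h]; positivity
  · nlinarith [h]

/-- `|ν x|² ≤ ‖ν‖ · ν(x* x)` via an approximate unit. -/
private lemma normsq_le (ν : A →L[ℂ] ℂ) (hpos : ∀ x : A, 0 ≤ x → 0 ≤ ν x) (x : A) :
    ‖ν x‖ ^ 2 ≤ ‖ν‖ * (ν (star x * x)).re := by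
  have hl := CStarAlgebra.increasingApproximateUnit A
  haveI : (CStarAlgebra.approximateUnit A).NeBot := hl.toIsApproximateUnit.neBot
  have htend : Filter.Tendsto (fun e : A => ‖ν (e * x)‖ ^ 2)
      (CStarAlgebra.approximateUnit A) (nhds (‖ν x‖ ^ 2)) := by
    have h1 := hl.toIsApproximateUnit.tendsto_mul_right x
    exact ((ν.continuous.tendsto x).comp h1 |>.norm).pow 2
  refine le_of_tendsto htend ?_
  filter_upwards [hl.eventually_nonneg, hl.eventually_norm] with e he hen
  have hse : star e = e := (IsSelfAdjoint.of_nonneg he).star_eq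
  calc ‖ν (e * x)‖ ^ 2 = ‖ν (star e * x)‖ ^ 2 := by rw [hse]
    _ ≤ (ν (star e * e)).re * (ν (star x * x)).re := cs ν hpos e x
    _ ≤ ‖ν‖ * (ν (star x * x)).re := by
        have h1 : (ν (star e * e)).re ≤ ‖ν (star e * e)‖ := Complex.re_le_norm _
        have h2 : ‖ν (star e * e)‖ ≤ ‖ν‖ * ‖star e * e‖ := ν.le_opNorm _
        have h3 : ‖star e * e‖ ≤ 1 := by
          calc ‖star e * e‖ ≤ ‖star e‖ * ‖e‖ := norm_mul_le _ _
            _ ≤ 1 * 1 := by rw [norm_star]; exact mul_le_mul hen hen (norm_nonneg _) zero_le_one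
            _ = 1 := one_mul 1
        have h4 : 0 ≤ (ν (star x * x)).re :=
          (Complex.nonneg_iff.mp (hpos _ (star_mul_self_nonneg x))).1
        have h5 : (ν (star e * e)).re ≤ ‖ν‖ := by
          calc (ν (star e * e)).re ≤ ‖ν‖ * ‖star e * e‖ := h1.trans h2
            _ ≤ ‖ν‖ * 1 := by gcongr
            _ = ‖ν‖ := mul_one _
        exact mul_le_mul_of_nonneg_right h5 h4

/-- tracial functionals commute products. -/
private lemma nucomm (ν : A →L[ℂ] ℂ) (htr : ∀ x : A, ν (star x * x) = ν (x * star x)) (x y : A) :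
    ν (x * y) = ν (y * x) := by
  -- E u w := ν (star u * w) - ν (w * star u); E u u = 0; polarize
  suffices h : ∀ u w : A, ν (star u * w) = ν (w * star u) by
    simpa using h (star x) y
  intro u w
  have e1 := htr (u + w)
  simp only [star_add, add_mul, mul_add, map_add] at e1
  have e2 := htr (u + Complex.I • w)
  simp only [star_add, star_smul, Complex.star_def, Complex.conj_I, add_mul, mul_add,
    smul_mul_assoc, mul_smul_comm, map_add, map_smul, smul_smul, smul_eq_mul, neg_mul,
    map_neg, neg_smul, mul_neg, neg_neg, ← mul_assoc, Complex.I_mul_I, one_mul] at e2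
  have e2' : Complex.I * (ν (star u * w) - ν (star w * u)) =
      Complex.I * (ν (w * star u) - ν (u * star w)) := by
    linear_combination e2 - htr u - htr w
  have e3 := mul_left_cancel₀ Complex.I_ne_zero e2'
  linear_combination e1/2 - htr u/2 - htr w/2 + e3/2

private lemma re_nonneg_of (ν : A →L[ℂ] ℂ) (hpos : ∀ x : A, 0 ≤ x → 0 ≤ ν x) (d : A) :
    0 ≤ (ν (star d * d)).re :=
  (Complex.nonneg_iff.mp (hpos _ (star_mul_self_nonneg d))).1

/-- CS corollary : `‖ν (u * d)‖ ≤ √‖ν‖ * ‖u‖ * √(ν (d* d)).re`. -/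
private lemma cs' (ν : A →L[ℂ] ℂ) (hpos : ∀ x : A, 0 ≤ x → 0 ≤ ν x) (u d : A) :
    ‖ν (u * d)‖ ≤ Real.sqrt ‖ν‖ * ‖u‖ * Real.sqrt ((ν (star d * d)).re) := by
  have h1 : ‖ν (u * d)‖ ^ 2 ≤ (ν (u * star u)).re * (ν (star d * d)).re := by
    simpa using cs ν hpos (star u) d
  have h2 : (ν (u * star u)).re ≤ ‖ν‖ * ‖u‖ ^ 2 := by
    have hre : (ν (u * star u)).re ≤ ‖ν (u * star u)‖ := Complex.re_le_norm _
    refine hre.trans ((ν.le_opNorm _).trans ?_)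
    have : ‖u * star u‖ ≤ ‖u‖ ^ 2 := by
      calc ‖u * star u‖ ≤ ‖u‖ * ‖star u‖ := norm_mul_le _ _
        _ = ‖u‖ ^ 2 := by rw [norm_star, sq]
    exact mul_le_mul_of_nonneg_left this (norm_nonneg ν)
  have hd := re_nonneg_of ν hpos d
  have h3 : ‖ν (u * d)‖ ^ 2 ≤ (‖ν‖ * ‖u‖ ^ 2) * (ν (star d * d)).re :=
    h1.trans (mul_le_mul_of_nonneg_right h2 hd)
  have hB : Real.sqrt ‖ν‖ * ‖u‖ * Real.sqrt ((ν (star d * d)).re) =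
      Real.sqrt ((‖ν‖ * ‖u‖ ^ 2) * (ν (star d * d)).re) := by
    rw [Real.sqrt_mul (by positivity), Real.sqrt_mul (norm_nonneg ν),
      Real.sqrt_sq (norm_nonneg u)]
  calc ‖ν (u * d)‖ = Real.sqrt (‖ν (u * d)‖ ^ 2) := (Real.sqrt_sq (norm_nonneg _)).symm
    _ ≤ Real.sqrt ((‖ν‖ * ‖u‖ ^ 2) * (ν (star d * d)).re) := Real.sqrt_le_sqrt h3
    _ = _ := hB.symm

private lemma nupow_norm_le {M : ℝ} {z : A} (hz : ‖z‖ ≤ M) : ∀ k, ‖nupow z k‖ ≤ M ^ (k + 1)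
  | 0 => by simpa [nupow] using hz
  | (k+1) => by
    have hM : 0 ≤ M := (norm_nonneg z).trans hz
    calc ‖nupow z (k+1)‖ = ‖nupow z k * z‖ := rfl
      _ ≤ ‖nupow z k‖ * ‖z‖ := norm_mul_le _ _
      _ ≤ M ^ (k+1) * M := by
          exact mul_le_mul (nupow_norm_le hz k) hz (norm_nonneg _) (by positivity)
      _ = M ^ (k+2) := by ring

private lemma keybound (ν : A →L[ℂ] ℂ) (hpos : ∀ x : A, 0 ≤ x → 0 ≤ ν x)
    (htr : ∀ x : A, ν (star x * x) = ν (x * star x))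
    {M : ℝ} {x z : A} (hx : ‖x‖ ≤ M) (hz : ‖z‖ ≤ M) :
    ∀ k : ℕ, ‖ν (nupow z k) - ν (nupow x k)‖ ≤
      (k + 1 : ℝ) * Real.sqrt ‖ν‖ * M ^ k *
        Real.sqrt ((ν (star (z - x) * (z - x))).re) := by
  have hM : 0 ≤ M := (norm_nonneg z).trans hz
  set ε : ℝ := Real.sqrt ((ν (star (z - x) * (z - x))).re) with hε
  have hε0 : 0 ≤ ε := Real.sqrt_nonneg _
  have hν0 : 0 ≤ Real.sqrt ‖ν‖ := Real.sqrt_nonneg _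
  -- basic bound with left multiplier
  have base : ∀ u : A, ‖ν (u * z) - ν (u * x)‖ ≤ Real.sqrt ‖ν‖ * ‖u‖ * ε := by
    intro u
    have : ν (u * z) - ν (u * x) = ν (u * (z - x)) := by
      rw [mul_sub, map_sub]
    rw [this]
    exact cs' ν hpos u (z - x)
  have aux : ∀ k : ℕ, ∀ w : A, ‖ν (w * nupow z k) - ν (w * nupow x k)‖ ≤
      (k + 1 : ℝ) * Real.sqrt ‖ν‖ * ‖w‖ * M ^ k * ε := by
    intro k
    induction k with
    | zero =>
      intro w
      simpa [nupow] using base w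
    | succ k ih =>
      intro w
      have split : ν (w * nupow z (k+1)) - ν (w * nupow x (k+1)) =
          (ν ((w * nupow z k) * z) - ν ((w * nupow z k) * x)) +
          (ν ((x * w) * nupow z k) - ν ((x * w) * nupow x k)) := by
        have e1 : w * nupow z (k+1) = (w * nupow z k) * z := by
          show w * (nupow z k * z) = _ ; rw [mul_assoc]
        have e2 : w * nupow x (k+1) = (w * nupow x k) * x := by
          show w * (nupow x k * x) = _ ; rw [mul_assoc]
        have e3 : ν ((w * nupow z k) * x) = ν ((x * w) * nupow z k) := by
          rw [nucomm ν htr, mul_assoc]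
        have e4 : ν ((w * nupow x k) * x) = ν ((x * w) * nupow x k) := by
          rw [nucomm ν htr, mul_assoc]
        rw [e1, e2, e3, e4]; ring
      rw [split]
      have b1 : ‖ν ((w * nupow z k) * z) - ν ((w * nupow z k) * x)‖ ≤
          Real.sqrt ‖ν‖ * (‖w‖ * M ^ (k+1)) * ε := by
        refine (base _).trans ?_
        have : ‖w * nupow z k‖ ≤ ‖w‖ * M ^ (k+1) :=
          (norm_mul_le _ _).trans (mul_le_mul_of_nonneg_left (nupow_norm_le hz k)
            (norm_nonneg w))
        gcongr
      have b2 : ‖ν ((x * w) * nupow z k) - ν ((x * w) * nupow x k)‖ ≤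
          (k + 1 : ℝ) * Real.sqrt ‖ν‖ * (M * ‖w‖) * M ^ k * ε := by
        refine (ih (x * w)).trans ?_
        have : ‖x * w‖ ≤ M * ‖w‖ :=
          (norm_mul_le _ _).trans (mul_le_mul_of_nonneg_right hx (norm_nonneg w))
        gcongr <;> positivity
      calc _ ≤ ‖ν ((w * nupow z k) * z) - ν ((w * nupow z k) * x)‖ +
            ‖ν ((x * w) * nupow z k) - ν ((x * w) * nupow x k)‖ := norm_add_le _ _
        _ ≤ Real.sqrt ‖ν‖ * (‖w‖ * M ^ (k+1)) * ε +
            (k + 1 : ℝ) * Real.sqrt ‖ν‖ * (M * ‖w‖) * M ^ k * ε := add_le_add b1 b2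
        _ ≤ (↑(k+1) + 1 : ℝ) * Real.sqrt ‖ν‖ * ‖w‖ * M ^ (k+1) * ε := by
            push_cast
            ring_nf
            nlinarith [sq_nonneg (M ^ k), mul_nonneg hν0 hε0]
  intro k
  induction k with
  | zero =>
    have h0 : ν (nupow z 0) - ν (nupow x 0) = ν (z - x) := by
      simp [nupow]
    rw [show (ν (nupow z 0) - ν (nupow x 0)) = ν (z - x) from h0]
    have h1 : ‖ν (z - x)‖ ^ 2 ≤ ‖ν‖ * (ν (star (z - x) * (z - x))).re :=
      normsq_le ν hpos (z - x)
    have h2 : ‖ν (z - x)‖ ≤ Real.sqrt ‖ν‖ * ε := by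
      have := Real.sqrt_le_sqrt h1
      rw [Real.sqrt_sq (norm_nonneg _)] at this
      refine this.trans ?_
      rw [Real.sqrt_mul (norm_nonneg ν)]
    simpa using h2
  | succ k _ =>
    have split : ν (nupow z (k+1)) - ν (nupow x (k+1)) =
        (ν (nupow z k * z) - ν (nupow z k * x)) +
        (ν (x * nupow z k) - ν (x * nupow x k)) := by
      have e3 : ν (nupow z k * x) = ν (x * nupow z k) := nucomm ν htr _ _
      have e4 : ν (nupow x (k+1)) = ν (x * nupow x k) := by
        show ν (nupow x k * x) = _ ; exact nucomm ν htr _ _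
      show ν (nupow z k * z) - ν (nupow x (k+1)) = _
      rw [e3, e4]; ring
    rw [split]
    have b1 : ‖ν (nupow z k * z) - ν (nupow z k * x)‖ ≤
        Real.sqrt ‖ν‖ * M ^ (k+1) * ε := by
      refine (base _).trans ?_
      have := nupow_norm_le hz k
      gcongr
    have b2 : ‖ν (x * nupow z k) - ν (x * nupow x k)‖ ≤
        (k + 1 : ℝ) * Real.sqrt ‖ν‖ * M * M ^ k * ε := by
      refine (aux k x).trans ?_
      gcongr <;> positivity
    calc _ ≤ _ + _ := norm_add_le _ _
      _ ≤ Real.sqrt ‖ν‖ * M ^ (k+1) * ε +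
          (k + 1 : ℝ) * Real.sqrt ‖ν‖ * M * M ^ k * ε := add_le_add b1 b2
      _ ≤ (↑(k+1) + 1 : ℝ) * Real.sqrt ‖ν‖ * M ^ (k+1) * ε := by
          push_cast
          ring_nf
          nlinarith [sq_nonneg (M ^ k), mul_nonneg hν0 hε0]

private lemma nupow_sandwich {A : Type*} [NonUnitalRing A] (p q : A) :
    ∀ k, p * nupow (q * p) k * q = nupow (p * q) (k + 1)
  | 0 => by
    show p * (q * p) * q = (p * q) * (p * q)
    simp [mul_assoc]
  | (k + 1) => by
    show p * (nupow (q * p) k * (q * p)) * q = nupow (p * q) (k + 1) * (p * q)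
    rw [← nupow_sandwich p q k]
    simp [mul_assoc]

private lemma nupow_swap (ν : A →L[ℂ] ℂ) (htr : ∀ x : A, ν (star x * x) = ν (x * star x))
    (p q : A) : ∀ k, ν (nupow (p * q) k) = ν (nupow (q * p) k)
  | 0 => nucomm ν htr p q
  | (k + 1) => by
    rw [← nupow_sandwich p q k]
    have e1 : ν ((p * nupow (q * p) k) * q) = ν (q * (p * nupow (q * p) k)) :=
      nucomm ν htr _ _
    have e2 : ν ((q * p) * nupow (q * p) k) = ν (nupow (q * p) k * (q * p)) :=
      nucomm ν htr _ _
    calc ν (p * nupow (q * p) k * q) = ν (q * (p * nupow (q * p) k)) := e1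
      _ = ν ((q * p) * nupow (q * p) k) := by rw [mul_assoc]
      _ = ν (nupow (q * p) k * (q * p)) := e2
      _ = ν (nupow (q * p) (k + 1)) := rfl


end Stmt19Aux

/-- Suppose a bounded sequence `(vₙ)` in a C*-algebra `A` satisfies
`‖a − a^{1/2} vₙ* vₙ a^{1/2}‖_τ → 0` and `‖b − vₙ a vₙ*‖_τ → 0` for a bounded tracial
positive functional `τ` and `a, b ∈ A₊`.  Then for every tracial positive functional
`ν ≤ τ` one has `ν(aᵏ) = ν(bᵏ)` for all `k ≥ 1`. -/
theorem stmt19 {A : Type*} [NonUnitalCStarAlgebra A] [PartialOrder A] [StarOrderedRing A]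
    (τ : A →L[ℂ] ℂ) (hτ_pos : ∀ x : A, 0 ≤ x → 0 ≤ τ x)
    (hτ_tracial : ∀ x : A, τ (star x * x) = τ (x * star x))
    (a b : A) (ha : 0 ≤ a) (hb : 0 ≤ b)
    (v : ℕ → A) (hv_bdd : ∃ C : ℝ, ∀ n, ‖v n‖ ≤ C)
    (h1 : Filter.Tendsto
      (fun n => norm (τ (star (a - CFC.sqrt a * (star (v n) * v n) * CFC.sqrt a) *
        (a - CFC.sqrt a * (star (v n) * v n) * CFC.sqrt a))))
      Filter.atTop (nhds 0))
    (h2 : Filter.Tendsto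
      (fun n => norm (τ (star (b - v n * a * star (v n)) *
        (b - v n * a * star (v n)))))
      Filter.atTop (nhds 0)) :
    ∀ ν : A →L[ℂ] ℂ, (∀ x : A, 0 ≤ x → 0 ≤ ν x) →
      (∀ x : A, ν (star x * x) = ν (x * star x)) →
      (∀ x : A, 0 ≤ x → ν x ≤ τ x) →
      ∀ k : ℕ, ν (nupow a k) = ν (nupow b k) := by
  intro ν hν_pos hν_tr hν_le k
  obtain ⟨C, hC⟩ := hv_bdd
  have hC0 : 0 ≤ C := (norm_nonneg (v 0)).trans (hC 0)
  set s : A := CFC.sqrt a with hs_def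
  have hs : s * s = a := CFC.sqrt_mul_sqrt_self a ha
  set y : ℕ → A := fun n => v n * a * star (v n) with hy_def
  set c : ℕ → A := fun n => s * (star (v n) * v n) * s with hc_def
  -- ν agrees on powers of `y n` and `c n`
  have hyc : ∀ n, ν (nupow (y n) k) = ν (nupow (c n) k) := by
    intro n
    have hpq : y n = (v n * s) * (s * star (v n)) := by
      simp only [hy_def, ← hs, mul_assoc]
    have hqp : c n = (s * star (v n)) * (v n * s) := by
      simp only [hc_def, mul_assoc]
    rw [hpq, hqp, nupow_swap ν hν_tr]
  -- uniform bound
  set M : ℝ := ‖a‖ + ‖b‖ + C * ‖a‖ * C + ‖s‖ * (C * C) * ‖s‖ with hM_def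
  have hMa : ‖a‖ ≤ M := by
    have := norm_nonneg b; have := norm_nonneg s
    nlinarith [mul_nonneg (mul_nonneg hC0 (norm_nonneg a)) hC0,
      mul_nonneg (mul_nonneg (norm_nonneg s) (mul_nonneg hC0 hC0)) (norm_nonneg s)]
  have hMb : ‖b‖ ≤ M := by
    have := norm_nonneg a
    nlinarith [mul_nonneg (mul_nonneg hC0 (norm_nonneg a)) hC0,
      mul_nonneg (mul_nonneg (norm_nonneg s) (mul_nonneg hC0 hC0)) (norm_nonneg s)]
  have hMy : ∀ n, ‖y n‖ ≤ M := by
    intro n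
    have hb1 : ‖y n‖ ≤ C * ‖a‖ * C := by
      calc ‖v n * a * star (v n)‖ ≤ ‖v n * a‖ * ‖star (v n)‖ := norm_mul_le _ _
        _ ≤ (‖v n‖ * ‖a‖) * ‖star (v n)‖ := by gcongr; exact norm_mul_le _ _
        _ ≤ (C * ‖a‖) * C := by rw [norm_star]; gcongr <;> [exact hC n; exact hC n]
        _ = C * ‖a‖ * C := rfl
    refine hb1.trans ?_
    have := norm_nonneg a; have := norm_nonneg b
    nlinarith [mul_nonneg (mul_nonneg (norm_nonneg s) (mul_nonneg hC0 hC0)) (norm_nonneg s)]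
  have hMc : ∀ n, ‖c n‖ ≤ M := by
    intro n
    have hb1 : ‖c n‖ ≤ ‖s‖ * (C * C) * ‖s‖ := by
      calc ‖s * (star (v n) * v n) * s‖ ≤ ‖s * (star (v n) * v n)‖ * ‖s‖ := norm_mul_le _ _
        _ ≤ (‖s‖ * ‖star (v n) * v n‖) * ‖s‖ := by gcongr; exact norm_mul_le _ _
        _ ≤ (‖s‖ * (C * C)) * ‖s‖ := by
            gcongr
            calc ‖star (v n) * v n‖ ≤ ‖star (v n)‖ * ‖v n‖ := norm_mul_le _ _
              _ ≤ C * C := by rw [norm_star]; gcongr <;> [exact hC n; exact hC n]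
        _ = ‖s‖ * (C * C) * ‖s‖ := rfl
    refine hb1.trans ?_
    have := norm_nonneg a; have := norm_nonneg b
    nlinarith [mul_nonneg (mul_nonneg hC0 (norm_nonneg a)) hC0]
  -- the ε-sequences tend to zero
  have hcompare : ∀ d : A, (ν (star d * d)).re ≤ ‖τ (star d * d)‖ := by
    intro d
    have h1 : ν (star d * d) ≤ τ (star d * d) := hν_le _ (star_mul_self_nonneg d)
    have h2 := (Complex.le_def.mp h1).1
    exact h2.trans (Complex.re_le_norm _)
  have hεb : Filter.Tendsto (fun n => Real.sqrt ((ν (star (b - y n) * (b - y n))).re))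
      Filter.atTop (nhds 0) := by
    have h0 : Filter.Tendsto (fun n => (ν (star (b - y n) * (b - y n))).re)
        Filter.atTop (nhds 0) :=
      squeeze_zero (fun n => re_nonneg_of ν hν_pos _) (fun n => hcompare _) h2
    simpa [Real.sqrt_zero] using h0.sqrt
  have hεa : Filter.Tendsto (fun n => Real.sqrt ((ν (star (a - c n) * (a - c n))).re))
      Filter.atTop (nhds 0) := by
    have h0 : Filter.Tendsto (fun n => (ν (star (a - c n) * (a - c n))).re)
        Filter.atTop (nhds 0) :=
      squeeze_zero (fun n => re_nonneg_of ν hν_pos _) (fun n => hcompare _) h1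
    simpa [Real.sqrt_zero] using h0.sqrt
  -- convergence of ν on powers
  have tb : Filter.Tendsto (fun n => ν (nupow (y n) k)) Filter.atTop
      (nhds (ν (nupow b k))) := by
    have hdiff : Filter.Tendsto (fun n => ν (nupow b k) - ν (nupow (y n) k))
        Filter.atTop (nhds 0) := by
      refine squeeze_zero_norm (fun n => keybound ν hν_pos hν_tr (hMy n) hMb k) ?_
      have := hεb.const_mul ((k + 1 : ℝ) * Real.sqrt ‖ν‖ * M ^ k)
      simpa using this
    have := Filter.Tendsto.sub (tendsto_const_nhds (x := ν (nupow b k))) hdiff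
    simpa using this
  have ta : Filter.Tendsto (fun n => ν (nupow (c n) k)) Filter.atTop
      (nhds (ν (nupow a k))) := by
    have hdiff : Filter.Tendsto (fun n => ν (nupow a k) - ν (nupow (c n) k))
        Filter.atTop (nhds 0) := by
      refine squeeze_zero_norm (fun n => keybound ν hν_pos hν_tr (hMc n) hMa k) ?_
      have := hεa.const_mul ((k + 1 : ℝ) * Real.sqrt ‖ν‖ * M ^ k)
      simpa using this
    have := Filter.Tendsto.sub (tendsto_const_nhds (x := ν (nupow a k))) hdiff
    simpa using this
  have tb' : Filter.Tendsto (fun n => ν (nupow (c n) k)) Filter.atTop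
      (nhds (ν (nupow b k))) := by
    refine tb.congr fun n => hyc n
  exact tendsto_nhds_unique tb' ta |>.symm
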